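/- If T = MN - NM with M² = 0 = N², then for every nonzero complex α and every positive integer k, the kernels of (T - αI)^k and (T + αI)^k have the same dimension. -/

import Mathlib

section Aux

variable {H : Type*} [NormedAddCommGroup H] [InnerProductSpace ℂ H] [CompleteSpace H]

private lemma aux_rank_le (M N T : H →L[ℂ] H) (hM : M * M = 0) (hN : N * N = 0)
    (hT : T = M * N - N * M) (β : ℂ) (hβ : β ≠ 0) (k : ℕ) :
    Module.rank ℂ (LinearMap.ker (((T - algebraMap ℂ (H →L[ℂ] H) β) ^ k : H →L[ℂ] H) : H →ₗ[ℂ] H)) ≤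
      Module.rank ℂ (LinearMap.ker (((T + algebraMap ℂ (H →L[ℂ] H) β) ^ k : H →L[ℂ] H) : H →ₗ[ℂ] H)) := by
  set A : H →L[ℂ] H := algebraMap ℂ (H →L[ℂ] H) β with hA
  set S : H →L[ℂ] H := M + N with hS
  -- S anticommutes with T
  have hMT : M * T = -(T * M) := by
    rw [hT]
    rw [mul_sub, sub_mul, ← mul_assoc M M N, hM, mul_assoc N M M, hM]
    simp [mul_assoc]
  have hNT : N * T = -(T * N) := by
    rw [hT]
    rw [mul_sub, sub_mul, mul_assoc M N N, hN, ← mul_assoc N N M, hN]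
    simp [mul_assoc]
  have hST : S * T = -(T * S) := by
    rw [hS, add_mul, mul_add, hMT, hNT]; abel
  -- A commutes with everything
  have hSA : S * A = A * S := (Algebra.commutes β S).symm
  -- S * (T - A) = -((T + A) * S)
  have hS1 : S * (T - A) = -((T + A) * S) := by
    rw [mul_sub, hST, hSA, add_mul]; abel
  -- (T + A)^k * S = (-1)^k • (S * (T - A)^k)
  have hTAS : (T + A) * S = -(S * (T - A)) := by rw [hS1, neg_neg]
  have hSk : ∀ m : ℕ, (T + A) ^ m * S = ((-1 : ℂ) ^ m) • (S * (T - A) ^ m) := by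
    intro m
    induction m with
    | zero => simp
    | succ n ih =>
      calc (T + A) ^ (n + 1) * S = (T + A) ^ n * ((T + A) * S) := by
            rw [pow_succ, mul_assoc]
        _ = -((T + A) ^ n * S * (T - A)) := by rw [hTAS, mul_neg, mul_assoc]
        _ = -((((-1 : ℂ) ^ n) • (S * (T - A) ^ n)) * (T - A)) := by rw [ih]
        _ = ((-1 : ℂ) ^ (n + 1)) • (S * (T - A) ^ (n + 1)) := by
            rw [smul_mul_assoc, mul_assoc, ← pow_succ, pow_succ (-1 : ℂ)]
            simp [neg_smul]
  -- S ^ 4 = T ^ 2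
  have hSS : S * S = M * N + N * M := by
    rw [hS, add_mul, mul_add, mul_add, hM, hN]; abel
  have hT2 : T * T = S * (S * (S * S)) := by
    rw [show S * (S * (S * S)) = (S * S) * (S * S) by rw [mul_assoc]]
    rw [hSS, hT]
    rw [sub_mul, mul_sub, mul_sub, add_mul, mul_add, mul_add]
    rw [show M * N * (N * M) = M * (N * N) * M by rw [mul_assoc, mul_assoc, mul_assoc]]
    rw [show N * M * (M * N) = N * (M * M) * N by rw [mul_assoc, mul_assoc, mul_assoc]]
    rw [hM, hN]
    simp
  -- key injectivity: x ∈ ker (T - A)^m and T (T x) = 0 imply x = 0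
  have key : ∀ (m : ℕ) (x : H), ((T - A) ^ m) x = 0 → T (T x) = 0 → x = 0 := by
    intro m
    induction m with
    | zero => intro x h _; simpa using h
    | succ n ih =>
      intro x h h2
      have hy : ((T - A) ^ n) ((T - A) x) = 0 := by
        rw [pow_succ, ContinuousLinearMap.mul_apply] at h
        exact h
      have hTy : T (T ((T - A) x)) = 0 := by
        have hAx : A x = β • x := by
          simp [hA, Algebra.algebraMap_eq_smul_one]
        have : (T - A) x = T x - β • x := by
          simp [ContinuousLinearMap.sub_apply, hAx]
        rw [this, map_sub, map_sub, map_smul, map_smul, h2]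
        simp [h2]
      have hz : (T - A) x = 0 := ih ((T - A) x) hy hTy
      have hTx : T x = β • x := by
        have : T x - β • x = 0 := by
          have hAx : A x = β • x := by
            simp [hA, Algebra.algebraMap_eq_smul_one]
          rw [← hAx]; simpa [ContinuousLinearMap.sub_apply] using hz
        exact eq_of_sub_eq_zero this
      have : (β * β) • x = 0 := by
        rw [← h2, hTx, map_smul, hTx, smul_smul]
      have hββ : β * β ≠ 0 := mul_ne_zero hβ hβ
      rcases smul_eq_zero.mp this with h' | h'
      · exact absurd h' hββ
      · exact h'
  -- S maps ker (T-A)^k into ker (T+A)^k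
  have hmap : ∀ x ∈ LinearMap.ker (((T - A) ^ k : H →L[ℂ] H) : H →ₗ[ℂ] H), S x ∈ LinearMap.ker (((T + A) ^ k : H →L[ℂ] H) : H →ₗ[ℂ] H) := by
    intro x hx
    rw [LinearMap.mem_ker, ContinuousLinearMap.coe_coe] at hx ⊢
    have := DFunLike.congr_fun (hSk k) x
    rw [ContinuousLinearMap.mul_apply] at this
    rw [show (((T + A) ^ k) : H →L[ℂ] H) (S x) = ((T + A) ^ k * S) x from rfl] at *
    rw [this]
    simp only [ContinuousLinearMap.smul_apply, ContinuousLinearMap.mul_apply, hx, map_zero,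
      smul_zero]
  -- the restricted linear map
  let f : LinearMap.ker (((T - A) ^ k : H →L[ℂ] H) : H →ₗ[ℂ] H) →ₗ[ℂ] LinearMap.ker (((T + A) ^ k : H →L[ℂ] H) : H →ₗ[ℂ] H) :=
    LinearMap.restrict (S : H →ₗ[ℂ] H) hmap
  have hinj : Function.Injective f := by
    rw [injective_iff_map_eq_zero]
    intro x hx
    have hSx : S (x : H) = 0 := by
      have := congrArg (Subtype.val) hx
      exact this
    have hTTx : T (T (x : H)) = 0 := by
      have := DFunLike.congr_fun hT2 (x : H)
      simp only [ContinuousLinearMap.mul_apply] at this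
      rw [this, hSx]
      simp
    have := key k (x : H) (LinearMap.mem_ker.mp x.2) hTTx
    exact Subtype.ext this
  exact LinearMap.rank_le_of_injective f hinj

end Aux

/-- If `T = MN - NM` with `M² = 0 = N²`, then for every nonzero `α` and `k ≥ 1`,
`nul (T - αI)^k = nul (T + αI)^k`. -/
theorem stmt_8 {H : Type*} [NormedAddCommGroup H] [InnerProductSpace ℂ H]
    [CompleteSpace H] (M N T : H →L[ℂ] H) (hM : M * M = 0) (hN : N * N = 0)
    (hT : T = M * N - N * M) (α : ℂ) (hα : α ≠ 0) (k : ℕ) (hk : 1 ≤ k) :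
    Module.rank ℂ (LinearMap.ker (((T - algebraMap ℂ (H →L[ℂ] H) α) ^ k : H →L[ℂ] H) : H →ₗ[ℂ] H)) =
      Module.rank ℂ (LinearMap.ker (((T + algebraMap ℂ (H →L[ℂ] H) α) ^ k : H →L[ℂ] H) : H →ₗ[ℂ] H)) := by
  have h1 := aux_rank_le M N T hM hN hT α hα k
  have h2 := aux_rank_le M N T hM hN hT (-α) (neg_ne_zero.mpr hα) k
  rw [map_neg, sub_neg_eq_add, ← sub_eq_add_neg] at h2
  exact le_antisymm h1 h2
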